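/- Let n ≥ 2 be an integer, C > 0, and let v be twice continuously differentiable on (a,b) ⊆ (0,∞) satisfying the radial Hamiltonian stationary ODE v''(r)/(1+v'(r)^2) + (n−1)(r·v'(r) − v(r))/(r^2+v(r)^2) = C·(1+v'(r)^2)^{1/2}/(r^2+v(r)^2)^{(n−1)/2} on (a,b). If t₀ ∈ (a,b) with v(t₀) > 0 and v'(t₀) > 0, then v'(r) > 0 for all r ∈ [t₀, b); in particular v is strictly increasing on [t₀, b). -/

import Mathlib

open Set Filter Topology

/-- (From the proofs of Proposition `prop41` and Corollary `initial`
of Chen–Warren.)  Let `C > 0` and let `v` be a C² solution on `(a,b) ⊆ (0,∞)` of the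
radial Hamiltonian stationary ODE.  If `v(t₀) > 0` and `v'(t₀) > 0` at some
`t₀ ∈ (a,b)`, then `v' > 0` on `[t₀, b)`; in particular `v` is strictly increasing
on `[t₀, b)`. -/
theorem derivative_stays_positive
    (n : ℕ) (hn : 2 ≤ n) (C a b : ℝ) (hC : 0 < C) (ha : 0 ≤ a) (hab : a < b)
    (v : ℝ → ℝ) (hv : ContDiffOn ℝ 2 v (Set.Ioo a b))
    (hode : ∀ r ∈ Set.Ioo a b,
      deriv (deriv v) r / (1 + (deriv v r) ^ 2)
        + ((n : ℝ) - 1) * (r * deriv v r - v r) / (r ^ 2 + (v r) ^ 2)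
        = C * Real.sqrt (1 + (deriv v r) ^ 2)
            / Real.sqrt ((r ^ 2 + (v r) ^ 2) ^ (n - 1)))
    (t₀ : ℝ) (ht₀ : t₀ ∈ Set.Ioo a b) (hvt : 0 < v t₀) (hv't : 0 < deriv v t₀) :
    (∀ r ∈ Set.Ico t₀ b, 0 < deriv v r) ∧ StrictMonoOn v (Set.Ico t₀ b) := by
  have hopen : IsOpen (Set.Ioo a b) := isOpen_Ioo
  have hv1 : ContDiffOn ℝ 1 (deriv v) (Set.Ioo a b) :=
    hv.deriv_of_isOpen hopen (by norm_num)
  have hcontd : ∀ x ∈ Set.Ioo a b, ContinuousAt (deriv v) x := fun x hx =>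
    hv1.continuousOn.continuousAt (hopen.mem_nhds hx)
  have key : ∀ r ∈ Set.Ico t₀ b, 0 < deriv v r := by
    by_contra h
    push_neg at h
    obtain ⟨r₀, hr₀, hr₀'⟩ := h
    set S : Set ℝ := {r | r ∈ Set.Ico t₀ b ∧ deriv v r ≤ 0} with hSdef
    have hne : S.Nonempty := ⟨r₀, hr₀, hr₀'⟩
    have hbdd : BddBelow S := ⟨t₀, fun x hx => hx.1.1⟩
    set s := sInf S with hs_def
    have hst₀ : t₀ ≤ s := le_csInf hne fun x hx => hx.1.1
    have hsb : s < b := lt_of_le_of_lt (csInf_le hbdd ⟨hr₀, hr₀'⟩) hr₀.2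
    have hsab : s ∈ Set.Ioo a b := ⟨lt_of_lt_of_le ht₀.1 hst₀, hsb⟩
    -- deriv v s ≤ 0
    have hds_le : deriv v s ≤ 0 := by
      have hmem : s ∈ closure S := csInf_mem_closure hne hbdd
      have hnb : (𝓝[S] s).NeBot := mem_closure_iff_nhdsWithin_neBot.mp hmem
      exact le_of_tendsto ((hcontd s hsab).continuousWithinAt)
        (eventually_mem_nhdsWithin.mono fun x (hx : x ∈ S) => hx.2)
    have hst : t₀ < s := by
      rcases lt_or_eq_of_le hst₀ with h | h
      · exact h
      · exact absurd hds_le (by rw [← h]; exact not_le.mpr hv't)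
    -- deriv v > 0 on [t₀, s)
    have hpos : ∀ r ∈ Set.Ico t₀ s, 0 < deriv v r := by
      intro r hr
      by_contra hle
      push_neg at hle
      have hrS : r ∈ S := ⟨⟨hr.1, lt_trans hr.2 hsb⟩, hle⟩
      exact absurd (csInf_le hbdd hrS) (not_le.mpr hr.2)
    -- deriv v s = 0
    have hds0 : deriv v s = 0 := by
      refine le_antisymm hds_le ?_
      have h1 : Tendsto (deriv v) (𝓝[<] s) (𝓝 (deriv v s)) :=
        (hcontd s hsab).continuousWithinAt
      refine ge_of_tendsto h1 ?_
      filter_upwards [Ioo_mem_nhdsLT_of_mem (⟨hst, le_refl s⟩ : s ∈ Set.Ioc t₀ s)] with x hx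
      exact (hpos x ⟨hx.1.le, hx.2⟩).le
    -- v s > 0
    have hvs : 0 < v s := by
      have hsub : Set.Icc t₀ s ⊆ Set.Ioo a b := fun x hx =>
        ⟨lt_of_lt_of_le ht₀.1 hx.1, lt_of_le_of_lt hx.2 hsb⟩
      have hmono : StrictMonoOn v (Set.Icc t₀ s) := by
        apply strictMonoOn_of_deriv_pos (convex_Icc _ _) (hv.continuousOn.mono hsub)
        intro x hx
        rw [interior_Icc] at hx
        exact hpos x ⟨hx.1.le, hx.2⟩
      have := hmono (left_mem_Icc.mpr hst.le) (right_mem_Icc.mpr hst.le) hst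
      linarith
    have hs0 : 0 < s := lt_of_le_of_lt ha hsab.1
    have hden : 0 < s ^ 2 + (v s) ^ 2 := by positivity
    have hsqrt : 0 < Real.sqrt ((s ^ 2 + (v s) ^ 2) ^ (n - 1)) :=
      Real.sqrt_pos.mpr (by positivity)
    have hn1 : (1 : ℝ) ≤ (n : ℝ) - 1 := by
      have : (2 : ℝ) ≤ (n : ℝ) := by exact_mod_cast hn
      linarith
    -- ODE at s
    have hode_s := hode s hsab
    rw [hds0] at hode_s
    rw [show (1 : ℝ) + 0 ^ 2 = 1 by norm_num, Real.sqrt_one, mul_one, div_one] at hode_s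
    have hrw : ((n : ℝ) - 1) * (s * 0 - v s) / (s ^ 2 + (v s) ^ 2)
        = -(((n : ℝ) - 1) * v s / (s ^ 2 + (v s) ^ 2)) := by ring
    rw [hrw] at hode_s
    have h2 : 0 < deriv (deriv v) s := by
      have t1 : 0 < C / Real.sqrt ((s ^ 2 + (v s) ^ 2) ^ (n - 1)) := div_pos hC hsqrt
      have t2 : 0 < ((n : ℝ) - 1) * v s / (s ^ 2 + (v s) ^ 2) :=
        div_pos (mul_pos (by linarith) hvs) hden
      linarith
    -- slope argument : contradiction
    have hder : HasDerivAt (deriv v) (deriv (deriv v) s) s :=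
      ((hv1.differentiableOn one_ne_zero).differentiableAt (hopen.mem_nhds hsab)).hasDerivAt
    have hslope : Tendsto (slope (deriv v) s) (𝓝[≠] s) (𝓝 (deriv (deriv v) s)) :=
      hasDerivAt_iff_tendsto_slope.mp hder
    have hslope' : Tendsto (slope (deriv v) s) (𝓝[<] s) (𝓝 (deriv (deriv v) s)) :=
      hslope.mono_left (nhdsWithin_mono s fun x hx => ne_of_lt hx)
    have hevpos : ∀ᶠ x in 𝓝[<] s, 0 < slope (deriv v) s x :=
      hslope'.eventually (eventually_gt_nhds h2)
    have hnear : ∀ᶠ x in 𝓝[<] s, x ∈ Set.Ioo t₀ s :=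
      eventually_of_mem (Ioo_mem_nhdsLT_of_mem ⟨hst, le_refl s⟩) fun x hx => hx
    obtain ⟨x, hx1, hx2⟩ := (hevpos.and hnear).exists
    have hxs : x - s < 0 := sub_neg.mpr hx2.2
    rw [slope_def_field, hds0, sub_zero] at hx1
    have hdx : deriv v x < 0 := by
      rcases div_pos_iff.mp hx1 with ⟨_, h⟩ | ⟨h, _⟩
      · linarith
      · exact h
    exact absurd (hpos x ⟨hx2.1.le, hx2.2⟩) (not_lt.mpr hdx.le)
  refine ⟨key, ?_⟩
  apply strictMonoOn_of_deriv_pos (convex_Ico _ _)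
  · exact hv.continuousOn.mono fun x hx => ⟨lt_of_lt_of_le ht₀.1 hx.1, hx.2⟩
  · intro x hx
    rw [interior_Ico] at hx
    exact key x ⟨hx.1.le, hx.2⟩
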